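/- (Lemma 1, sufficiency of the cumulative-reward-augmented state for VaR.) In a finite-horizon MDP with SAS reward r, salvage v, and threshold τ ∈ ℝ: the supremum over all history-dependent deterministic policies π of the probability P_π(Φ_π ≥ τ) := Σ_{ω : Φ_π(ω) ≥ τ} P_π(ω) equals the supremum of the same quantity taken only over the history-dependent policies induced by augmented policies σ : Fin N → S × ℝ → A, where the policy induced by σ chooses at time t on history (x_0,…,x_t) the action σ t (x_t, c_t), with c_0 = 0 and c_{s+1} = c_s + r x_s (σ s (x_s, c_s)) x_{s+1}. In other words, the optimal VaR probability of the original MDP equals the optimal value of the augmented-state 0-1 MDP whose state is the pair (current state, cumulative reward) and whose only reward is the terminal indicator 1[c_N + v(x_N) ≥ τ]. -/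

import Mathlib

/-- The action function induced by a history-dependent deterministic policy
`π : (t : Fin N) → (Fin (t+1) → S) → A`: at time `t` on the path `ω`, it applies `π t`
to the history `(ω 0, …, ω t)`. -/
def histAct {S A : Type} (N : ℕ) (π : (t : Fin N) → (Fin (t.val + 1) → S) → A)
    (t : Fin N) (ω : Fin (N + 1) → S) : A :=
  π t (fun s => ω (Fin.castLE (Nat.succ_le_succ t.isLt.le) s))

/-- The cumulative reward sequence `c` along a path `ω` under an augmented policy
`σ : Fin N → S × ℝ → A`: `c 0 = 0` and
`c (s+1) = c s + r (ω s) (σ s (ω s, c s)) (ω (s+1))`. -/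
noncomputable def cumReward {S A : Type} (N : ℕ) (r : S → A → S → ℝ)
    (σ : Fin N → S × ℝ → A) (ω : Fin (N + 1) → S) : ℕ → ℝ
  | 0 => 0
  | s + 1 =>
      if h : s < N then
        cumReward N r σ ω s +
          r (ω ⟨s, Nat.lt_succ_of_lt h⟩)
            (σ ⟨s, h⟩ (ω ⟨s, Nat.lt_succ_of_lt h⟩, cumReward N r σ ω s))
            (ω ⟨s + 1, Nat.succ_lt_succ h⟩)
      else cumReward N r σ ω s

/-- The (history-dependent) action function induced by an augmented policy
`σ : Fin N → S × ℝ → A`: at time `t` on the path `ω`, it chooses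
`σ t (ω t, c t)` where `c` is the cumulative reward sequence. -/
noncomputable def augAct {S A : Type} (N : ℕ) (r : S → A → S → ℝ)
    (σ : Fin N → S × ℝ → A) (t : Fin N) (ω : Fin (N + 1) → S) : A :=
  σ t (ω t.castSucc, cumReward N r σ ω t.val)

open Classical in
/-- The probability `P_π(Φ_π ≥ τ)` that the total reward reaches the threshold `τ`,
for the history-dependent policy with action function `act`. -/
noncomputable def varProb {S A : Type} [Fintype S] (N : ℕ)
    (p : S → A → S → ℝ) (r : S → A → S → ℝ) (μ0 : S → ℝ) (v : S → ℝ) (τ : ℝ)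
    (act : Fin N → (Fin (N + 1) → S) → A) : ℝ :=
  ∑ ω : Fin (N + 1) → S,
    if τ ≤ (∑ t : Fin N, r (ω t.castSucc) (act t ω) (ω t.succ)) + v (ω (Fin.last N)) then
      μ0 (ω 0) * ∏ t : Fin N, p (ω t.castSucc) (act t ω) (ω t.succ)
    else 0

set_option linter.unusedVariables false
set_option linter.unusedSectionVars false

namespace VarAux

variable {S A : Type} [Fintype S] [Fintype A] [Nonempty S] [Nonempty A]

/-- extend a prefix of length k+1 to a full path of length N+1 by repeating the last state -/
def extPath (N k : ℕ) (hk : k ≤ N) (ω : Fin (k + 1) → S) : Fin (N + 1) → S :=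
  fun i => if h : i.val < k + 1 then ω ⟨i.val, h⟩ else ω (Fin.last k)

lemma extPath_lt (N k : ℕ) (hk : k ≤ N) (ω : Fin (k + 1) → S) (i : Fin (N + 1))
    (hi : i.val < k + 1) : extPath N k hk ω i = ω ⟨i.val, hi⟩ := dif_pos hi

lemma extPath_eq_self (N : ℕ) (ω : Fin (N + 1) → S) : extPath N N le_rfl ω = ω := by
  funext i
  rw [extPath_lt N N le_rfl ω i i.isLt]

open Classical in
/-- value function: `Uval m x c` is the optimal probability with `m` steps to go. -/
noncomputable def Uval (N : ℕ) (p r : S → A → S → ℝ) (v : S → ℝ) (τ : ℝ) :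
    ℕ → S → ℝ → ℝ
  | 0, x, c => if τ ≤ c + v x then 1 else 0
  | m + 1, x, c => Finset.univ.sup' Finset.univ_nonempty
      (fun a : A => ∑ y, p x a y * Uval N p r v τ m y (c + r x a y))

/-- an action function is adapted if it depends only on the history up to the current time -/
def Adapted (N : ℕ) (act : Fin N → (Fin (N + 1) → S) → A) : Prop :=
  ∀ (t : Fin N) (ω ω' : Fin (N + 1) → S),
    (∀ i : Fin (N + 1), i.val ≤ t.val → ω i = ω' i) → act t ω = act t ω'

lemma histAct_adapted (N : ℕ) (π : (t : Fin N) → (Fin (t.val + 1) → S) → A) :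
    Adapted N (histAct N π) := by
  intro t ω ω' h
  unfold histAct
  congr 1
  funext s
  exact h _ (Nat.lt_succ_iff.mp s.isLt)

lemma cumReward_congr (N : ℕ) (r : S → A → S → ℝ) (σ : Fin N → S × ℝ → A)
    (ω ω' : Fin (N + 1) → S) (k : ℕ)
    (h : ∀ i : Fin (N + 1), i.val ≤ k → ω i = ω' i) :
    cumReward N r σ ω k = cumReward N r σ ω' k := by
  induction k with
  | zero => rfl
  | succ s ih =>
    have ih' := ih (fun i hi => h i (Nat.le_succ_of_le hi))
    unfold cumReward
    by_cases hs : s < N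
    · rw [dif_pos hs, dif_pos hs, ih']
      rw [h ⟨s, Nat.lt_succ_of_lt hs⟩ (Nat.le_succ s),
        h ⟨s + 1, Nat.succ_lt_succ hs⟩ le_rfl]
    · rw [dif_neg hs, dif_neg hs, ih']

lemma augAct_adapted (N : ℕ) (r : S → A → S → ℝ) (σ : Fin N → S × ℝ → A) :
    Adapted N (augAct N r σ) := by
  intro t ω ω' h
  unfold augAct
  rw [h t.castSucc le_rfl, cumReward_congr N r σ ω ω' t.val (fun i hi => h i hi)]



variable (N : ℕ) (p r : S → A → S → ℝ) (μ0 : S → ℝ) (v : S → ℝ) (τ : ℝ)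

/-- partial value: paths of length k plus value-to-go -/
noncomputable def Tval (act : Fin N → (Fin (N + 1) → S) → A) (k : ℕ) (hk : k ≤ N) : ℝ :=
  ∑ ω : Fin (k + 1) → S,
    μ0 (ω 0) *
      (∏ t : Fin k, p (ω t.castSucc)
        (act ⟨t.val, lt_of_lt_of_le t.isLt hk⟩ (extPath N k hk ω)) (ω t.succ)) *
      Uval N p r v τ (N - k) (ω (Fin.last k))
        (∑ t : Fin k, r (ω t.castSucc)
          (act ⟨t.val, lt_of_lt_of_le t.isLt hk⟩ (extPath N k hk ω)) (ω t.succ))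

lemma Tval_N (act : Fin N → (Fin (N + 1) → S) → A) :
    Tval N p r μ0 v τ act N le_rfl = varProb N p r μ0 v τ act := by
  unfold Tval varProb
  apply Finset.sum_congr rfl
  intro ω _
  rw [extPath_eq_self]
  have hUv : Uval N p r v τ (N - N) = Uval N p r v τ 0 := by rw [Nat.sub_self]
  rw [hUv]
  have hact : ∀ t : Fin N, (⟨t.val, lt_of_lt_of_le t.isLt le_rfl⟩ : Fin N) = t :=
    fun t => rfl
  simp only [hact]
  unfold Uval
  split
  · ring
  · ring

lemma Tval_zero (act : Fin N → (Fin (N + 1) → S) → A) :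
    Tval N p r μ0 v τ act 0 (Nat.zero_le N) = ∑ x : S, μ0 x * Uval N p r v τ N x 0 := by
  unfold Tval
  rw [← Equiv.sum_comp (Equiv.funUnique (Fin 1) S).symm]
  apply Finset.sum_congr rfl
  intro x _
  simp [Equiv.funUnique, Nat.sub_zero]


lemma extPath_snoc (k : ℕ) (hk1 : k + 1 ≤ N) (ω : Fin (k + 1) → S) (y : S)
    (i : Fin (N + 1)) (hi : i.val ≤ k) :
    extPath N (k + 1) hk1 (Fin.snoc ω y) i = extPath N k (Nat.le_of_succ_le hk1) ω i := by
  have h1 : i.val < k + 1 := Nat.lt_succ_of_le hi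
  have h2 : i.val < k + 2 := Nat.lt_succ_of_lt h1
  rw [extPath_lt N (k+1) hk1 _ i h2, extPath_lt N k (Nat.le_of_succ_le hk1) ω i h1]
  have : (⟨i.val, h2⟩ : Fin (k + 2)) = Fin.castSucc ⟨i.val, h1⟩ := rfl
  rw [this, Fin.snoc_castSucc]

def snocEquiv (k : ℕ) : ((Fin (k + 1) → S) × S) ≃ (Fin (k + 2) → S) where
  toFun z := Fin.snoc z.1 z.2
  invFun ω := (fun i => ω i.castSucc, ω (Fin.last (k + 1)))
  left_inv z := by
    have h1 : (fun i : Fin (k + 1) => (Fin.snoc z.1 z.2 : Fin (k + 2) → S) i.castSucc) = z.1 :=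
      funext fun i => Fin.snoc_castSucc _ _ _
    have h2 : (Fin.snoc z.1 z.2 : Fin (k + 2) → S) (Fin.last (k + 1)) = z.2 :=
      Fin.snoc_last _ _
    exact Prod.ext h1 h2
  right_inv ω := Fin.snoc_init_self ω

/-- the one-step transition factor rewrite under snoc -/
lemma snoc_factor (f : S → A → S → ℝ) (act : Fin N → (Fin (N + 1) → S) → A)
    (hadapt : Adapted N act) (k : ℕ) (hk1 : k + 1 ≤ N)
    (ω : Fin (k + 1) → S) (y : S) (t : Fin k) (h1 : t.val < N) :
    f ((Fin.snoc ω y : Fin (k + 2) → S) t.castSucc.castSucc)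
      (act ⟨t.val, h1⟩ (extPath N (k + 1) hk1 (Fin.snoc ω y)))
      ((Fin.snoc ω y : Fin (k + 2) → S) t.castSucc.succ)
    = f (ω t.castSucc)
      (act ⟨t.val, h1⟩ (extPath N k (Nat.le_of_succ_le hk1) ω))
      (ω t.succ) := by
  rw [Fin.snoc_castSucc, Fin.succ_castSucc, Fin.snoc_castSucc]
  congr 1
  apply hadapt
  intro i hi
  exact extPath_snoc N k hk1 ω y i (Nat.le_trans hi (Nat.le_of_lt t.isLt))

lemma snoc_factor_last (f : S → A → S → ℝ) (act : Fin N → (Fin (N + 1) → S) → A)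
    (hadapt : Adapted N act) (k : ℕ) (hk1 : k + 1 ≤ N)
    (ω : Fin (k + 1) → S) (y : S) :
    f ((Fin.snoc ω y : Fin (k + 2) → S) (Fin.last k).castSucc)
      (act ⟨k, hk1⟩ (extPath N (k + 1) hk1 (Fin.snoc ω y)))
      ((Fin.snoc ω y : Fin (k + 2) → S) (Fin.last k).succ)
    = f (ω (Fin.last k))
      (act ⟨k, hk1⟩ (extPath N k (Nat.le_of_succ_le hk1) ω)) y := by
  rw [Fin.snoc_castSucc, Fin.succ_last, Fin.snoc_last]
  congr 1
  apply hadapt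
  intro i hi
  exact extPath_snoc N k hk1 ω y i hi

lemma Tval_succ_eq (act : Fin N → (Fin (N + 1) → S) → A) (hadapt : Adapted N act)
    (k : ℕ) (hk1 : k + 1 ≤ N) :
    Tval N p r μ0 v τ act (k + 1) hk1 =
    ∑ ω : Fin (k + 1) → S, ∑ y : S,
      μ0 (ω 0) *
        (∏ t : Fin k, p (ω t.castSucc)
          (act ⟨t.val, lt_of_lt_of_le t.isLt (Nat.le_of_succ_le hk1)⟩
            (extPath N k (Nat.le_of_succ_le hk1) ω)) (ω t.succ)) *
      (p (ω (Fin.last k)) (act ⟨k, hk1⟩ (extPath N k (Nat.le_of_succ_le hk1) ω)) y *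
        Uval N p r v τ (N - (k + 1)) y
          ((∑ t : Fin k, r (ω t.castSucc)
              (act ⟨t.val, lt_of_lt_of_le t.isLt (Nat.le_of_succ_le hk1)⟩
                (extPath N k (Nat.le_of_succ_le hk1) ω)) (ω t.succ))
            + r (ω (Fin.last k)) (act ⟨k, hk1⟩ (extPath N k (Nat.le_of_succ_le hk1) ω)) y)) := by
  have hk : k ≤ N := Nat.le_of_succ_le hk1
  unfold Tval
  rw [← Equiv.sum_comp (snocEquiv (S := S) k), Fintype.sum_prod_type]
  refine Finset.sum_congr rfl fun ω _ => Finset.sum_congr rfl fun y _ => ?_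
  have hse : (snocEquiv (S := S) k) (ω, y) = Fin.snoc ω y := rfl
  simp only [hse]
  have h0 : (Fin.snoc ω y : Fin (k + 2) → S) 0 = ω 0 := by
    have h : (0 : Fin (k + 2)) = Fin.castSucc 0 := rfl
    rw [h, Fin.snoc_castSucc]
  have hlast : (Fin.snoc ω y : Fin (k + 2) → S) (Fin.last (k + 1)) = y :=
    Fin.snoc_last _ _
  have hprod : (∏ t : Fin (k + 1), p ((Fin.snoc ω y : Fin (k + 2) → S) t.castSucc)
        (act ⟨t.val, lt_of_lt_of_le t.isLt hk1⟩ (extPath N (k + 1) hk1 (Fin.snoc ω y)))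
        ((Fin.snoc ω y : Fin (k + 2) → S) t.succ))
      = (∏ t : Fin k, p (ω t.castSucc)
          (act ⟨t.val, lt_of_lt_of_le t.isLt hk⟩ (extPath N k hk ω)) (ω t.succ)) *
        p (ω (Fin.last k)) (act ⟨k, hk1⟩ (extPath N k hk ω)) y := by
    rw [Fin.prod_univ_castSucc]
    congr 1
    · exact Finset.prod_congr rfl fun t _ =>
        snoc_factor N p act hadapt k hk1 ω y t (lt_of_lt_of_le t.castSucc.isLt hk1)
    · exact snoc_factor_last N p act hadapt k hk1 ω y
  have hsum : (∑ t : Fin (k + 1), r ((Fin.snoc ω y : Fin (k + 2) → S) t.castSucc)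
        (act ⟨t.val, lt_of_lt_of_le t.isLt hk1⟩ (extPath N (k + 1) hk1 (Fin.snoc ω y)))
        ((Fin.snoc ω y : Fin (k + 2) → S) t.succ))
      = (∑ t : Fin k, r (ω t.castSucc)
          (act ⟨t.val, lt_of_lt_of_le t.isLt hk⟩ (extPath N k hk ω)) (ω t.succ)) +
        r (ω (Fin.last k)) (act ⟨k, hk1⟩ (extPath N k hk ω)) y := by
    rw [Fin.sum_univ_castSucc]
    congr 1
    · exact Finset.sum_congr rfl fun t _ =>
        snoc_factor N r act hadapt k hk1 ω y t (lt_of_lt_of_le t.castSucc.isLt hk1)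
    · exact snoc_factor_last N r act hadapt k hk1 ω y
  rw [h0, hlast, hprod, hsum]
  ring

lemma Tval_succ_le (hp0 : ∀ x a y, 0 ≤ p x a y) (hμ0 : ∀ x, 0 ≤ μ0 x)
    (act : Fin N → (Fin (N + 1) → S) → A) (hadapt : Adapted N act)
    (k : ℕ) (hk1 : k + 1 ≤ N) :
    Tval N p r μ0 v τ act (k + 1) hk1 ≤ Tval N p r μ0 v τ act k (Nat.le_of_succ_le hk1) := by
  rw [Tval_succ_eq N p r μ0 v τ act hadapt k hk1]
  unfold Tval
  apply Finset.sum_le_sum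
  intro ω _
  rw [← Finset.mul_sum]
  apply mul_le_mul_of_nonneg_left
  · have hNk : N - k = (N - (k + 1)) + 1 := by omega
    rw [hNk]
    exact Finset.le_sup' (α := ℝ)
      (fun a : A => ∑ y, p (ω (Fin.last k)) a y *
        Uval N p r v τ (N - (k + 1)) y
          ((∑ t : Fin k, r (ω t.castSucc)
              (act ⟨t.val, lt_of_lt_of_le t.isLt (Nat.le_of_succ_le hk1)⟩
                (extPath N k (Nat.le_of_succ_le hk1) ω)) (ω t.succ)) +
            r (ω (Fin.last k)) a y))
      (Finset.mem_univ (act ⟨k, hk1⟩ (extPath N k (Nat.le_of_succ_le hk1) ω)))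
  · exact mul_nonneg (hμ0 _) (Finset.prod_nonneg fun t _ => hp0 _ _ _)

noncomputable def bestAct (f : A → ℝ) : A :=
  (Finset.exists_mem_eq_sup' (Finset.univ_nonempty (α := A)) f).choose

lemma bestAct_spec (f : A → ℝ) :
    Finset.univ.sup' Finset.univ_nonempty f = f (bestAct f) :=
  (Finset.exists_mem_eq_sup' (Finset.univ_nonempty (α := A)) f).choose_spec.2

/-- optimal augmented policy -/
noncomputable def sigmaStar : Fin N → S × ℝ → A := fun t xc =>
  bestAct (fun a : A => ∑ y, p xc.1 a y * Uval N p r v τ (N - t.val - 1) y (xc.2 + r xc.1 a y))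

lemma cumReward_eq (σ : Fin N → S × ℝ → A) (ω : Fin (N + 1) → S) (k : ℕ) (hk : k ≤ N) :
    cumReward N r σ ω k =
    ∑ t : Fin k, r (ω (Fin.castLE hk t).castSucc)
      (augAct N r σ (Fin.castLE hk t) ω) (ω (Fin.castLE hk t).succ) := by
  induction k with
  | zero => simp [cumReward]
  | succ s ih =>
    have hs : s < N := Nat.lt_of_succ_le hk
    have hk' : s ≤ N := Nat.le_of_succ_le hk
    rw [Fin.sum_univ_castSucc]
    show (if h : s < N then
        cumReward N r σ ω s +
          r (ω ⟨s, Nat.lt_succ_of_lt h⟩)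
            (σ ⟨s, h⟩ (ω ⟨s, Nat.lt_succ_of_lt h⟩, cumReward N r σ ω s))
            (ω ⟨s + 1, Nat.succ_lt_succ h⟩)
      else cumReward N r σ ω s) = _
    rw [dif_pos hs]
    refine congrArg₂ (· + ·) ?_ ?_
    · exact (ih hk').trans (Finset.sum_congr rfl fun t _ => rfl)
    · rfl

lemma Tval_succ_star (k : ℕ) (hk1 : k + 1 ≤ N) :
    Tval N p r μ0 v τ (augAct N r (sigmaStar N p r v τ)) (k + 1) hk1 =
    Tval N p r μ0 v τ (augAct N r (sigmaStar N p r v τ)) k (Nat.le_of_succ_le hk1) := by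
  have hk : k ≤ N := Nat.le_of_succ_le hk1
  rw [Tval_succ_eq N p r μ0 v τ _ (augAct_adapted N r _) k hk1]
  unfold Tval
  apply Finset.sum_congr rfl
  intro ω _
  rw [← Finset.mul_sum]
  congr 1
  set σ := sigmaStar N p r v τ with hσ
  set c := ∑ t : Fin k, r (ω t.castSucc)
      (augAct N r σ ⟨t.val, lt_of_lt_of_le t.isLt hk⟩ (extPath N k hk ω)) (ω t.succ) with hc
  -- identify the action chosen at time k
  have hcum : cumReward N r σ (extPath N k hk ω) k = c := by
    rw [cumReward_eq N r σ (extPath N k hk ω) k hk, hc]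
    apply Finset.sum_congr rfl
    intro t _
    have e1 : extPath N k hk ω (Fin.castLE hk t).castSucc = ω t.castSucc :=
      extPath_lt N k hk ω _ (Nat.lt_succ_of_lt t.isLt)
    have e2 : extPath N k hk ω (Fin.castLE hk t).succ = ω t.succ :=
      extPath_lt N k hk ω _ (Nat.succ_lt_succ t.isLt)
    rw [e1, e2]
    rfl
  have hact : augAct N r σ ⟨k, hk1⟩ (extPath N k hk ω) = σ ⟨k, hk1⟩ (ω (Fin.last k), c) := by
    unfold augAct
    rw [hcum]
    congr 1
    have e3 : extPath N k hk ω (Fin.castSucc ⟨k, hk1⟩) = ω (Fin.last k) :=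
      extPath_lt N k hk ω _ (Nat.lt_succ_self k)
    rw [e3]
  rw [hact]
  have hNk : N - k = (N - (k + 1)) + 1 := by omega
  rw [hNk]
  have hbest := bestAct_spec (A := A)
    (fun a : A => ∑ y, p (ω (Fin.last k)) a y *
      Uval N p r v τ (N - (k + 1)) y (c + r (ω (Fin.last k)) a y))
  have hσval : σ ⟨k, hk1⟩ (ω (Fin.last k), c) =
      bestAct (fun a : A => ∑ y, p (ω (Fin.last k)) a y *
        Uval N p r v τ (N - (k + 1)) y (c + r (ω (Fin.last k)) a y)) := rfl
  rw [hσval, ← hbest]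
  rfl

lemma Tval_le_start (hp0 : ∀ x a y, 0 ≤ p x a y) (hμ0 : ∀ x, 0 ≤ μ0 x)
    (act : Fin N → (Fin (N + 1) → S) → A) (hadapt : Adapted N act) :
    ∀ k, ∀ hk : k ≤ N,
      Tval N p r μ0 v τ act k hk ≤ ∑ x : S, μ0 x * Uval N p r v τ N x 0 := by
  intro k
  induction k with
  | zero => intro hk; exact le_of_eq (Tval_zero N p r μ0 v τ act)
  | succ k ih =>
    intro hk1
    exact le_trans (Tval_succ_le N p r μ0 v τ hp0 hμ0 act hadapt k hk1)
      (ih (Nat.le_of_succ_le hk1))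

lemma varProb_le_val (hp0 : ∀ x a y, 0 ≤ p x a y) (hμ0 : ∀ x, 0 ≤ μ0 x)
    (act : Fin N → (Fin (N + 1) → S) → A) (hadapt : Adapted N act) :
    varProb N p r μ0 v τ act ≤ ∑ x : S, μ0 x * Uval N p r v τ N x 0 := by
  rw [← Tval_N N p r μ0 v τ act]
  exact Tval_le_start N p r μ0 v τ hp0 hμ0 act hadapt N le_rfl

lemma Tval_star_const :
    ∀ k, ∀ hk : k ≤ N,
      Tval N p r μ0 v τ (augAct N r (sigmaStar N p r v τ)) k hk =
        ∑ x : S, μ0 x * Uval N p r v τ N x 0 := by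
  intro k
  induction k with
  | zero => intro hk; exact Tval_zero N p r μ0 v τ _
  | succ k ih =>
    intro hk1
    exact (Tval_succ_star N p r μ0 v τ k hk1).trans (ih (Nat.le_of_succ_le hk1))

lemma varProb_star :
    varProb N p r μ0 v τ (augAct N r (sigmaStar N p r v τ)) =
      ∑ x : S, μ0 x * Uval N p r v τ N x 0 := by
  rw [← Tval_N N p r μ0 v τ _]
  exact Tval_star_const N p r μ0 v τ N le_rfl

/-- convert an augmented policy into a history-dependent policy with the same actions -/
noncomputable def augToHist (σ : Fin N → S × ℝ → A) :
    (t : Fin N) → (Fin (t.val + 1) → S) → A := fun t h =>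
  σ t (h (Fin.last t.val), cumReward N r σ (extPath N t.val t.isLt.le h) t.val)

lemma histAct_augToHist (σ : Fin N → S × ℝ → A) :
    histAct N (augToHist N r σ) = augAct N r σ := by
  funext t ω
  show σ t (_, _) = σ t (_, _)
  have hagree : ∀ i : Fin (N + 1), i.val ≤ t.val →
      extPath N t.val t.isLt.le
        (fun s => ω (Fin.castLE (Nat.succ_le_succ t.isLt.le) s)) i = ω i := by
    intro i hi
    rw [extPath_lt N t.val t.isLt.le _ i (Nat.lt_succ_of_le hi)]
    rfl
  refine congrArg (σ t) (Prod.ext ?_ ?_)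
  · rfl
  · exact cumReward_congr N r σ _ ω t.val hagree

end VarAux

/-- Lemma 1 (sufficiency of the cumulative-reward-augmented state for VaR): the
supremum of `P_π(Φ_π ≥ τ)` over all history-dependent deterministic policies equals
the supremum over the history-dependent policies induced by augmented policies
`σ : Fin N → S × ℝ → A` acting on the pair (current state, cumulative reward);
i.e. the optimal VaR probability of the original MDP equals the optimal value of the
augmented-state 0-1 MDP with terminal indicator reward `1[c_N + v(x_N) ≥ τ]`. -/
theorem varProb_hist_sup_eq_aug_sup
    {S A : Type} [Fintype S] [Fintype A] [Nonempty S] [Nonempty A]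
    (N : ℕ) (hN : 1 ≤ N)
    (p : S → A → S → ℝ)
    (hp0 : ∀ x a y, 0 ≤ p x a y)
    (hp1 : ∀ x a, ∑ y, p x a y = 1)
    (r : S → A → S → ℝ)
    (μ0 : S → ℝ) (hμ0 : ∀ x, 0 ≤ μ0 x) (hμ1 : ∑ x, μ0 x = 1)
    (v : S → ℝ) (τ : ℝ) :
    sSup {q : ℝ | ∃ π : (t : Fin N) → (Fin (t.val + 1) → S) → A,
        q = varProb N p r μ0 v τ (histAct N π)}
    = sSup {q : ℝ | ∃ σ : Fin N → S × ℝ → A,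
        q = varProb N p r μ0 v τ (augAct N r σ)} := by
  set B := ∑ x : S, μ0 x * VarAux.Uval N p r v τ N x 0 with hB
  set Sh := {q : ℝ | ∃ π : (t : Fin N) → (Fin (t.val + 1) → S) → A,
      q = varProb N p r μ0 v τ (histAct N π)} with hSh
  set Sa := {q : ℝ | ∃ σ : Fin N → S × ℝ → A,
      q = varProb N p r μ0 v τ (augAct N r σ)} with hSa
  have hboundH : ∀ q ∈ Sh, q ≤ B := by
    rintro q ⟨π, rfl⟩
    exact VarAux.varProb_le_val N p r μ0 v τ hp0 hμ0 _ (VarAux.histAct_adapted N π)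
  have hboundA : ∀ q ∈ Sa, q ≤ B := by
    rintro q ⟨σ, rfl⟩
    exact VarAux.varProb_le_val N p r μ0 v τ hp0 hμ0 _ (VarAux.augAct_adapted N r σ)
  have hBmemA : B ∈ Sa := ⟨VarAux.sigmaStar N p r v τ, (VarAux.varProb_star N p r μ0 v τ).symm⟩
  have hBmemH : B ∈ Sh := ⟨VarAux.augToHist N r (VarAux.sigmaStar N p r v τ), by
    rw [VarAux.histAct_augToHist]
    exact (VarAux.varProb_star N p r μ0 v τ).symm⟩
  have h1 : sSup Sh = B :=
    le_antisymm (csSup_le ⟨B, hBmemH⟩ hboundH)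
      (le_csSup ⟨B, fun q hq => hboundH q hq⟩ hBmemH)
  have h2 : sSup Sa = B :=
    le_antisymm (csSup_le ⟨B, hBmemA⟩ hboundA)
      (le_csSup ⟨B, fun q hq => hboundA q hq⟩ hBmemA)
  rw [h1, h2]
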